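/- arXiv:math/0703752 — 2 statements merged into one kernel-verified Lean document; each statement's English description precedes it below -/
import Mathlib

section
/- Let α be irrational with bounded partial quotients and let β ∈ ℚ + ℚα. Then there exists c₁ > 0 such that for each m ∈ ℕ, any two distinct points among 0, −α, …, −(m−1)α, β, β−α, …, β−(m−1)α are at distance (on the circle) at least c₁/m. -/
/-- Distance from a real number to the nearest integer (= distance on the circle ℝ/ℤ). -/
noncomputable def distNearestInt (x : ℝ) : ℝ := |x - round x|

lemma dni_neg (x : ℝ) : distNearestInt (-x) = distNearestInt x := by
  unfold distNearestInt
  apply le_antisymm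
  · calc |(-x) - round (-x)| ≤ |(-x) - ((-round x : ℤ) : ℝ)| := round_le _ _
      _ = |x - round x| := by
          push_cast
          rw [show -x - -(round x : ℝ) = -(x - round x) by ring, abs_neg]
  · calc |x - round x| ≤ |x - ((-round (-x) : ℤ) : ℝ)| := round_le _ _
      _ = |(-x) - round (-x)| := by
          push_cast
          rw [show x - -(round (-x) : ℝ) = -((-x) - round (-x)) by ring, abs_neg]

lemma dni_add_int (x : ℝ) (n : ℤ) : distNearestInt (x + n) = distNearestInt x := by
  unfold distNearestInt
  rw [round_add_intCast]; push_cast; ring_nf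

lemma dni_int_mul_le (n : ℤ) (x : ℝ) :
    distNearestInt ((n : ℝ) * x) ≤ |(n : ℝ)| * distNearestInt x := by
  unfold distNearestInt
  calc |(n:ℝ)*x - round ((n:ℝ)*x)| ≤ |(n:ℝ)*x - ((n * round x : ℤ) : ℝ)| := round_le _ _
    _ = |(n:ℝ)| * |x - round x| := by push_cast; rw [← abs_mul]; ring_nf

/-- Let α be irrational with bounded partial quotients (so that ‖jα‖ ≥ C₁/|j|
for j ≠ 0), and let β ∈ ℚ + ℚα.  Then there exists c₁ > 0 such that for each
m ≥ 1 any two points among 0, −α, …, −(m−1)α, β, β−α, …, β−(m−1)α which are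
distinct on the circle are at circle distance at least c₁/m. -/
theorem stmt4 (α : ℝ) (hα : Irrational α)
    (C₁ : ℝ) (hC₁ : 0 < C₁)
    (hbpq : ∀ j : ℤ, j ≠ 0 → C₁ / |(j : ℝ)| ≤ distNearestInt ((j : ℝ) * α))
    (β : ℝ) (hβ : ∃ r s : ℚ, β = (r : ℝ) + (s : ℝ) * α) :
    ∃ c₁ : ℝ, 0 < c₁ ∧ ∀ m : ℕ, 1 ≤ m →
      ∀ (b b' : Bool) (j j' : ℕ), j < m → j' < m →
        distNearestInt (((if b then β else 0) - (j : ℝ) * α) -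
          ((if b' then β else 0) - (j' : ℝ) * α)) ≠ 0 →
        c₁ / m ≤ distNearestInt (((if b then β else 0) - (j : ℝ) * α) -
          ((if b' then β else 0) - (j' : ℝ) * α)) := by
  obtain ⟨r, s, hβ⟩ := hβ
  obtain ⟨Q, A, B, hQpos, hAr, hBs⟩ :
      ∃ Q A B : ℤ, 0 < Q ∧ (Q:ℝ) * (r:ℝ) = (A:ℝ) ∧ (Q:ℝ) * (s:ℝ) = (B:ℝ) := by
    refine ⟨(r.den : ℤ) * (s.den : ℤ), r.num * (s.den : ℤ), s.num * (r.den : ℤ),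
      by positivity, ?_, ?_⟩
    · push_cast
      rw [Rat.cast_def]
      field_simp
    · push_cast
      rw [Rat.cast_def (q := s)]
      field_simp
  have hQR : (0:ℝ) < (Q:ℝ) := by exact_mod_cast hQpos
  have hden : (0:ℝ) < (Q:ℝ) * ((|B|:ℝ) + (Q:ℝ)) := by
    nlinarith [abs_nonneg ((B:ℝ))]
  set c₁ : ℝ := min C₁ (min (1 / Q) (C₁ / ((Q:ℝ) * ((|B|:ℝ) + (Q:ℝ))))) with hc₁def
  have hc₁pos : 0 < c₁ := by
    apply lt_min hC₁
    exact lt_min (by positivity) (div_pos hC₁ hden)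
  refine ⟨c₁, hc₁pos, ?_⟩
  intro m hm
  have hmR : (1:ℝ) ≤ (m:ℝ) := by exact_mod_cast hm
  have hmpos : (0:ℝ) < (m:ℝ) := by linarith
  -- pure multiple case
  have h1 : ∀ k : ℤ, |k| < (m:ℤ) → distNearestInt ((k:ℝ) * α) ≠ 0 →
      c₁ / m ≤ distNearestInt ((k:ℝ) * α) := by
    intro k hk hne
    have hk0 : k ≠ 0 := by
      rintro rfl
      exact hne (by simp [distNearestInt])
    have hkabs : (0:ℝ) < |(k:ℝ)| := abs_pos.mpr (by exact_mod_cast hk0)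
    have hkm : |(k:ℝ)| ≤ (m:ℝ) := by
      rw [← Int.cast_abs]
      exact_mod_cast le_of_lt hk
    calc c₁ / m ≤ C₁ / m := by gcongr; exact min_le_left _ _
      _ ≤ C₁ / |(k:ℝ)| := by gcongr
      _ ≤ _ := hbpq k hk0
  -- β-shifted case
  have h2 : ∀ k : ℤ, |k| ≤ (m:ℤ) → distNearestInt ((r:ℝ) + ((s:ℝ) + k) * α) ≠ 0 →
      c₁ / m ≤ distNearestInt ((r:ℝ) + ((s:ℝ) + k) * α) := by
    intro k hk hne
    have hQx : (Q:ℝ) * ((r:ℝ) + ((s:ℝ) + k) * α)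
        = (A:ℝ) + ((B + Q * k : ℤ) : ℝ) * α := by
      push_cast
      linear_combination hAr + α * hBs
    by_cases hN : B + Q * k = 0
    · -- x = r rational, denominator Q
      have hNcast : (B:ℝ) + (Q:ℝ) * (k:ℝ) = 0 := by exact_mod_cast hN
      have hsk : (s:ℝ) + (k:ℝ) = 0 := by
        have h : (Q:ℝ) * ((s:ℝ) + k) = 0 := by rw [mul_add, hBs]; linarith
        exact (mul_eq_zero.mp h).resolve_left (ne_of_gt hQR)
      have hxr : (r:ℝ) + ((s:ℝ) + k) * α = (r:ℝ) := by rw [hsk]; ring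
      rw [hxr] at hne ⊢
      have hnum : (r:ℝ) - round (r:ℝ) = ((A - Q * round (r:ℝ) : ℤ) : ℝ) / (Q:ℝ) := by
        rw [eq_div_iff (ne_of_gt hQR)]
        push_cast
        linear_combination hAr
      have hnz : (A - Q * round (r:ℝ) : ℤ) ≠ 0 := by
        intro h0
        apply hne
        unfold distNearestInt
        rw [hnum, h0]
        simp
      have h1le : (1:ℝ) ≤ |((A - Q * round (r:ℝ) : ℤ) : ℝ)| := by
        rw [← Int.cast_abs]
        exact_mod_cast Int.one_le_abs hnz
      have hge : 1 / (Q:ℝ) ≤ distNearestInt (r:ℝ) := by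
        unfold distNearestInt
        rw [hnum, abs_div, abs_of_pos hQR]
        gcongr
      calc c₁ / m ≤ c₁ := div_le_self hc₁pos.le hmR
        _ ≤ 1 / (Q:ℝ) := le_trans (min_le_right _ _) (min_le_left _ _)
        _ ≤ _ := hge
    · -- N ≠ 0
      have hNabs : (0:ℝ) < |((B + Q * k : ℤ):ℝ)| := abs_pos.mpr (by exact_mod_cast hN)
      have hstep1 : C₁ / |((B + Q * k : ℤ):ℝ)|
          ≤ distNearestInt ((Q:ℝ) * ((r:ℝ) + ((s:ℝ) + k) * α)) := by
        rw [hQx, show (A:ℝ) + ((B + Q * k : ℤ):ℝ) * α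
            = ((B + Q * k : ℤ):ℝ) * α + (A:ℝ) by ring, dni_add_int]
        exact hbpq _ hN
      have hstep2 : distNearestInt ((Q:ℝ) * ((r:ℝ) + ((s:ℝ) + k) * α))
          ≤ (Q:ℝ) * distNearestInt ((r:ℝ) + ((s:ℝ) + k) * α) := by
        have := dni_int_mul_le Q ((r:ℝ) + ((s:ℝ) + k) * α)
        rwa [abs_of_pos hQR] at this
      have hxge : C₁ / (|((B + Q * k : ℤ):ℝ)| * (Q:ℝ))
          ≤ distNearestInt ((r:ℝ) + ((s:ℝ) + k) * α) := by
        rw [div_le_iff₀ (by positivity)]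
        have h0 : C₁ ≤ distNearestInt ((Q:ℝ) * ((r:ℝ) + ((s:ℝ) + k) * α))
            * |((B + Q * k : ℤ):ℝ)| := (div_le_iff₀ hNabs).mp hstep1
        nlinarith [hstep2, abs_nonneg ((B + Q * k : ℤ):ℝ)]
      have hNbound : |((B + Q * k : ℤ):ℝ)| ≤ ((|B|:ℝ) + (Q:ℝ)) * m := by
        have h1' : |B + Q * k| ≤ |B| + Q * m := by
          calc |B + Q * k| ≤ |B| + |Q * k| := abs_add_le _ _
            _ = |B| + Q * |k| := by rw [abs_mul, abs_of_pos hQpos]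
            _ ≤ |B| + Q * m := by nlinarith [hk, hQpos, abs_nonneg k]
        have h2' : |B| + Q * (m:ℤ) ≤ (|B| + Q) * m := by
          have hB0 : (0:ℤ) ≤ |B| := abs_nonneg _
          have hm1 : (1:ℤ) ≤ (m:ℤ) := by exact_mod_cast hm
          nlinarith
        rw [← Int.cast_abs]
        calc ((|B + Q * k| : ℤ):ℝ) ≤ (((|B| + Q) * m : ℤ):ℝ) := by
              exact_mod_cast le_trans h1' h2'
          _ = ((|B|:ℝ) + (Q:ℝ)) * m := by push_cast; ring
      calc c₁ / m ≤ (C₁ / ((Q:ℝ) * ((|B|:ℝ) + (Q:ℝ)))) / m := by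
            gcongr
            exact le_trans (min_le_right _ _) (min_le_right _ _)
        _ ≤ C₁ / (|((B + Q * k : ℤ):ℝ)| * (Q:ℝ)) := by
            rw [div_div]
            refine (div_le_div_iff_of_pos_left hC₁ (by positivity) (by positivity)).mpr ?_
            calc |((B + Q * k : ℤ):ℝ)| * (Q:ℝ) ≤ (((|B|:ℝ) + (Q:ℝ)) * m) * Q := by
                  gcongr
              _ = (Q:ℝ) * ((|B|:ℝ) + (Q:ℝ)) * m := by ring
        _ ≤ _ := hxge
  -- now the four cases
  intro b b' j j' hj hj' hne
  have hjm : |((j':ℤ) - (j:ℤ))| < (m:ℤ) := by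
    rw [abs_sub_lt_iff]; omega
  cases b <;> cases b'
  · simp only [Bool.false_eq_true, if_false] at hne ⊢
    rw [show ((0:ℝ) - (j : ℝ) * α) - ((0:ℝ) - (j' : ℝ) * α)
        = (((j':ℤ) - (j:ℤ) : ℤ) : ℝ) * α by push_cast; ring] at hne ⊢
    exact h1 _ hjm hne
  · simp only [Bool.false_eq_true, if_false, if_true] at hne ⊢
    rw [show ((0:ℝ) - (j : ℝ) * α) - (β - (j' : ℝ) * α)
        = -((r:ℝ) + ((s:ℝ) + (((j:ℤ) - (j':ℤ) : ℤ) : ℝ)) * α) by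
      rw [hβ]; push_cast; ring, dni_neg] at hne ⊢
    refine h2 _ ?_ hne
    rw [abs_sub_le_iff]; omega
  · simp only [Bool.false_eq_true, if_false, if_true] at hne ⊢
    rw [show (β - (j : ℝ) * α) - ((0:ℝ) - (j' : ℝ) * α)
        = (r:ℝ) + ((s:ℝ) + (((j':ℤ) - (j:ℤ) : ℤ) : ℝ)) * α by
      rw [hβ]; push_cast; ring] at hne ⊢
    refine h2 _ ?_ hne
    rw [abs_sub_le_iff]; omega
  · simp only [if_true] at hne ⊢
    rw [show (β - (j : ℝ) * α) - (β - (j' : ℝ) * α)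
        = (((j':ℤ) - (j:ℤ) : ℤ) : ℝ) * α by push_cast; ring] at hne ⊢
    exact h1 _ hjm hne
end

section
/- Let α be irrational with denominators (qₙ) and f : 𝕋 → ℝ of bounded variation with mean c_f = ∫f dλ. Then the sequence of functions (f^{(qₙ)} − qₙc_f)ₙ is uniformly bounded: |f^{(qₙ)}(x) − qₙ c_f| ≤ Var f for all x ∈ 𝕋 and n. -/
open MeasureTheory

section DenjoyKoksmaAux

open Set

private lemma periodic_int_add (f : ℝ → ℝ) (hper : Function.Periodic f 1) (m : ℤ) (t : ℝ) :
    f (t + m) = f t := by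
  simpa using (hper.int_mul m) t

private lemma evar_translate (f : ℝ → ℝ) (c : ℝ) (s : Set ℝ) :
    eVariationOn (fun t => f (t + c)) s = eVariationOn f ((fun t => t + c) '' s) :=
  eVariationOn.comp_eq_of_monotoneOn f (fun t : ℝ => t + c)
    (fun a _ b _ hab => by simpa using hab)

private lemma evar_shift (f : ℝ → ℝ) (hper : Function.Periodic f 1) (m : ℤ) (a b : ℝ) :
    eVariationOn f (Icc a b) = eVariationOn f (Icc (a + m) (b + m)) := by
  have hfun : (fun t : ℝ => f (t + m)) = f := funext fun t => periodic_int_add f hper m t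
  calc eVariationOn f (Icc a b) = eVariationOn (fun t => f (t + (m : ℝ))) (Icc a b) := by
        rw [hfun]
    _ = eVariationOn f ((fun t : ℝ => t + (m : ℝ)) '' (Icc a b)) := evar_translate f m _
    _ = eVariationOn f (Icc (a + m) (b + m)) := by rw [Set.image_add_const_Icc]

private lemma evar_per (f : ℝ → ℝ) (hper : Function.Periodic f 1) (z : ℝ) :
    eVariationOn f (Icc z (z + 1)) = eVariationOn f (Icc 0 1) := by
  set m : ℤ := ⌊z⌋ + 1 with hm
  have h1 : z ≤ (m : ℝ) := by push_cast [hm]; linarith [Int.lt_floor_add_one z]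
  have h2 : (m : ℝ) ≤ z + 1 := by push_cast [hm]; linarith [Int.floor_le z]
  set u : ℝ := z + 1 - m with hu
  have hu0 : 0 ≤ u := by linarith
  have hu1 : u ≤ 1 := by linarith
  have A : eVariationOn f (Icc z (m : ℝ)) = eVariationOn f (Icc u 1) := by
    have := evar_shift f hper (1 - m) z m
    rw [hu]; convert this using 3 <;> push_cast <;> ring
  have B : eVariationOn f (Icc (m : ℝ) (z + 1)) = eVariationOn f (Icc 0 u) := by
    have := evar_shift f hper (-m) m (z + 1)
    rw [hu]; convert this using 3 <;> push_cast <;> ring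
  have C := eVariationOn.Icc_add_Icc f (s := Set.univ) h1 h2 (Set.mem_univ _)
  have D := eVariationOn.Icc_add_Icc f (s := Set.univ) hu0 hu1 (Set.mem_univ _)
  simp only [Set.univ_inter] at C D
  rw [← C, A, B, ← D, add_comm]

private lemma integrable_piece (f : ℝ → ℝ) (hper : Function.Periodic f 1)
    (hBV : BoundedVariationOn f (Set.Icc 0 1)) (k : ℤ) {a b : ℝ}
    (ha : a ∈ Icc (k : ℝ) (k + 1)) (hb : b ∈ Icc (k : ℝ) (k + 1)) :
    IntervalIntegrable f volume a b := by
  obtain ⟨p, q, hp, hq, hpq⟩ :=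
    hBV.locallyBoundedVariationOn.exists_monotoneOn_sub_monotoneOn
  have hsub : uIcc a b ⊆ Icc (k : ℝ) (k + 1) := fun t ht =>
    ⟨le_trans (le_inf ha.1 hb.1) ht.1, le_trans ht.2 (sup_le ha.2 hb.2)⟩
  have hmem : ∀ t ∈ Icc (k : ℝ) (k + 1), t - k ∈ Icc (0:ℝ) 1 := by
    rintro t ⟨h1, h2⟩; exact ⟨by linarith, by linarith⟩
  have hmono : ∀ (g : ℝ → ℝ), MonotoneOn g (Icc 0 1) →
      MonotoneOn (fun t => g (t - k)) (uIcc a b) := by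
    intro g hg s hs t ht hst
    exact hg (hmem _ (hsub hs)) (hmem _ (hsub ht)) (by linarith)
  have h1 : IntervalIntegrable (fun t => p (t - k)) volume a b :=
    (hmono p hp).intervalIntegrable
  have h2 : IntervalIntegrable (fun t => q (t - k)) volume a b :=
    (hmono q hq).intervalIntegrable
  have heq : EqOn f (fun t => p (t - k) - q (t - k)) (uIcc a b) := by
    intro t ht
    have : f t = f (t - k) := by
      have := periodic_int_add f hper k (t - k); simpa using this
    rw [this, hpq]; simp
  refine (h1.sub h2).congr ?_
  exact (fun t ht => (heq (Set.Ioc_subset_Icc_self ht)).symm)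

private lemma integrable_all (f : ℝ → ℝ) (hper : Function.Periodic f 1)
    (hBV : BoundedVariationOn f (Set.Icc 0 1)) (a b : ℝ) :
    IntervalIntegrable f volume a b := by
  -- first: from an integer k to any b ≥ k
  have step : ∀ (n : ℕ) (k : ℤ) (b : ℝ), (k : ℝ) ≤ b → b ≤ (k : ℝ) + n →
      IntervalIntegrable f volume k b := by
    intro n
    induction n with
    | zero =>
      intro k b h1 h2
      have : b = (k : ℝ) := le_antisymm (by simpa using h2) h1
      simp [this]
    | succ n ih =>
      intro k b h1 h2
      by_cases hb : b ≤ (k : ℝ) + n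
      · exact ih k b h1 hb
      push_neg at hb
      have hkn : IntervalIntegrable f volume k ((k : ℝ) + n) :=
        ih k _ (by simp) le_rfl
      have hlast : IntervalIntegrable f volume ((k : ℝ) + n) b := by
        have := integrable_piece f hper hBV (k + n)
          (a := (k : ℝ) + n) (b := b) (by push_cast; simp) (by push_cast at h2 ⊢; exact ⟨by linarith, by linarith⟩)
        simpa using this
      exact hkn.trans hlast
  -- now arbitrary a ≤ b
  have main : ∀ a b : ℝ, a ≤ b → IntervalIntegrable f volume a b := by
    intro a b hab
    set k : ℤ := ⌊a⌋ with hk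
    have hka : (k : ℝ) ≤ a := Int.floor_le a
    obtain ⟨n, hn⟩ : ∃ n : ℕ, b ≤ (k : ℝ) + n := by
      obtain ⟨n, hn⟩ := exists_nat_gt (b - k)
      exact ⟨n, by linarith⟩
    have h1 : IntervalIntegrable f volume k a := step n k a hka (by linarith)
    have h2 : IntervalIntegrable f volume k b := step n k b (by linarith) hn
    exact h1.symm.trans h2
  rcases le_total a b with h | h
  · exact main a b h
  · exact (main b a h).symm

private lemma exists_osc_point (f : ℝ → ℝ) {a b : ℝ} (hab : a < b)
    (hint : IntervalIntegrable f volume a b) (y : ℝ) :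
    ∃ t ∈ Icc a b, |f y - (∫ s in a..b, f s) / (b - a)| ≤ |f y - f t| := by
  have hIcc : IntegrableOn f (Icc a b) volume :=
    (integrableOn_Icc_iff_integrableOn_Ioc).mpr (hint.1)
  have hμ0 : volume (Icc a b) ≠ 0 := by
    simp [Real.volume_Icc]; linarith
  have hμt : volume (Icc a b) ≠ ⊤ := by simp [Real.volume_Icc]
  have havg : ⨍ s in Icc a b, f s = (∫ s in a..b, f s) / (b - a) := by
    rw [setAverage_eq, Real.volume_real_Icc_of_le hab.le, intervalIntegral.integral_of_le hab.le,
      ← MeasureTheory.integral_Icc_eq_integral_Ioc, smul_eq_mul]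
    rw [div_eq_inv_mul]
  rcases le_total (f y) (⨍ s in Icc a b, f s) with h | h
  · obtain ⟨t, ht, hft⟩ := exists_setAverage_le hμ0 hμt hIcc
    refine ⟨t, ht, ?_⟩
    have h2 : f y ≤ f t := le_trans h hft
    rw [← havg, abs_of_nonpos (by linarith), abs_of_nonpos (by linarith)]
    linarith
  · obtain ⟨t, ht, hft⟩ := exists_le_setAverage hμ0 hμt hIcc
    refine ⟨t, ht, ?_⟩
    have h2 : f t ≤ f y := le_trans hft h
    rw [← havg, abs_of_nonneg (by linarith), abs_of_nonneg (by linarith)]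
    linarith

private lemma var_sum_bound (f : ℝ → ℝ) (z : ℝ) (Q : ℕ) (hQ : 0 < Q) (u v : ℕ → ℝ)
    (hu : ∀ j, j < Q → u j ∈ Icc (z + j / Q) (z + (j + 1) / Q))
    (hv : ∀ j, j < Q → v j ∈ Icc (z + j / Q) (z + (j + 1) / Q)) :
    ENNReal.ofReal (∑ j ∈ Finset.range Q, |f (u j) - f (v j)|) ≤
      eVariationOn f (Icc z (z + 1)) := by
  have hQR : (0 : ℝ) < Q := by exact_mod_cast hQ
  set w : ℕ → ℝ := fun i =>
    if i < 2 * Q then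
      (if i % 2 = 0 then min (u (i / 2)) (v (i / 2)) else max (u (i / 2)) (v (i / 2)))
    else z + 1 with hw
  -- bounds for w
  have hjQ : ∀ j, j < Q → ((j : ℝ) + 1) / Q ≤ 1 := by
    intro j hj
    rw [div_le_one hQR]
    exact_mod_cast Nat.succ_le_of_lt hj
  have hlow : ∀ i, i < 2 * Q → z + (↑(i / 2) : ℝ) / Q ≤ w i := by
    intro i hi
    have hj : i / 2 < Q := by omega
    simp only [hw, if_pos hi]
    rcases Nat.even_or_odd i with he | ho
    · rw [if_pos (Nat.even_iff.mp he)]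
      exact le_min (hu _ hj).1 (hv _ hj).1
    · have hm1 : i % 2 = 1 := Nat.odd_iff.mp ho
      rw [if_neg (by omega : ¬ i % 2 = 0)]
      exact le_trans (hu _ hj).1 (le_max_left _ _)
  have hhigh : ∀ i, i < 2 * Q → w i ≤ z + ((↑(i / 2) : ℝ) + 1) / Q := by
    intro i hi
    have hj : i / 2 < Q := by omega
    simp only [hw, if_pos hi]
    rcases Nat.even_or_odd i with he | ho
    · rw [if_pos (Nat.even_iff.mp he)]
      exact le_trans (min_le_left _ _) (hu _ hj).2
    · have hm1 : i % 2 = 1 := Nat.odd_iff.mp ho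
      rw [if_neg (by omega : ¬ i % 2 = 0)]
      exact max_le (hu _ hj).2 (hv _ hj).2
  have hwmem : ∀ i, w i ∈ Icc z (z + 1) := by
    intro i
    by_cases hi : i < 2 * Q
    · have hj : i / 2 < Q := by omega
      constructor
      · refine le_trans ?_ (hlow i hi)
        have : (0:ℝ) ≤ (↑(i / 2) : ℝ) / Q := by positivity
        linarith
      · refine le_trans (hhigh i hi) ?_
        have := hjQ (i / 2) hj
        linarith
    · simp only [hw, if_neg hi]
      exact ⟨by linarith, le_rfl⟩
  have hwmono : Monotone w := by
    apply monotone_nat_of_le_succ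
    intro i
    by_cases hi1 : i + 1 < 2 * Q
    · have hi : i < 2 * Q := by omega
      rcases Nat.even_or_odd i with he | ho
      · -- i even : i/2 = (i+1)/2, min ≤ max
        have hm : i % 2 = 0 := Nat.even_iff.mp he
        have h2 : (i + 1) / 2 = i / 2 := by omega
        simp only [hw, if_pos hi, if_pos hi1, if_pos hm,
          if_neg (by omega : ¬ (i + 1) % 2 = 0), h2]
        exact le_trans (min_le_left _ _) (le_max_left _ _)
      · -- i odd : (i+1)/2 = i/2 + 1
        have hm1 : i % 2 = 1 := Nat.odd_iff.mp ho
        have h2 : (i + 1) / 2 = i / 2 + 1 := by omega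
        refine le_trans (hhigh i hi) (le_trans ?_ (hlow (i + 1) hi1))
        rw [h2]
        push_cast
        exact le_rfl
    · have hend : w (i + 1) = z + 1 := by simp only [hw, if_neg hi1]
      rw [hend]
      exact (hwmem i).2
  have key : ∀ j, j < Q →
      ENNReal.ofReal |f (u j) - f (v j)| = edist (f (w (2 * j + 1))) (f (w (2 * j))) := by
    intro j hj
    have hlt : 2 * j < 2 * Q := by omega
    have hlt1 : 2 * j + 1 < 2 * Q := by omega
    have hdiv : 2 * j / 2 = j := by omega
    have hdiv1 : (2 * j + 1) / 2 = j := by omega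
    have e0 : w (2 * j) = min (u j) (v j) := by
      simp only [hw, if_pos hlt, if_pos (by omega : 2 * j % 2 = 0), hdiv]
    have e1 : w (2 * j + 1) = max (u j) (v j) := by
      simp only [hw, if_pos hlt1, if_neg (by omega : ¬ (2 * j + 1) % 2 = 0), hdiv1]
    rw [e0, e1]
    rcases le_total (u j) (v j) with h | h
    · rw [min_eq_left h, max_eq_right h, edist_dist, Real.dist_eq, abs_sub_comm]
    · rw [min_eq_right h, max_eq_left h, edist_dist, Real.dist_eq]
  calc ENNReal.ofReal (∑ j ∈ Finset.range Q, |f (u j) - f (v j)|)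
      = ∑ j ∈ Finset.range Q, ENNReal.ofReal |f (u j) - f (v j)| :=
        ENNReal.ofReal_sum_of_nonneg (fun j _ => abs_nonneg _)
    _ = ∑ j ∈ Finset.range Q, edist (f (w (2 * j + 1))) (f (w (2 * j))) := by
        apply Finset.sum_congr rfl
        intro j hj
        exact key j (Finset.mem_range.mp hj)
    _ = ∑ i ∈ (Finset.range Q).image (fun j => 2 * j),
          edist (f (w (i + 1))) (f (w i)) := by
        rw [Finset.sum_image (fun a _ b _ h => by omega)]
    _ ≤ ∑ i ∈ Finset.range (2 * Q), edist (f (w (i + 1))) (f (w i)) := by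
        apply Finset.sum_le_sum_of_subset
        intro i hi
        simp only [Finset.mem_image, Finset.mem_range] at hi ⊢
        obtain ⟨j, hj, rfl⟩ := hi
        omega
    _ ≤ eVariationOn f (Icc z (z + 1)) := eVariationOn.sum_le (f := f) (n := 2 * Q) hwmono hwmem

private lemma main_bound (f : ℝ → ℝ) (hper : Function.Periodic f 1)
    (hBV : BoundedVariationOn f (Set.Icc 0 1)) (c : ℝ) (hc : c = ∫ t in (0:ℝ)..1, f t)
    (z : ℝ) (Q : ℕ) (hQ : 0 < Q) (y : ℕ → ℝ)
    (hy : ∀ j, j < Q → y j ∈ Icc (z + j / Q) (z + (j + 1) / Q)) :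
    |∑ j ∈ Finset.range Q, f (y j) - (Q : ℝ) * c| ≤
      (eVariationOn f (Set.Icc 0 1)).toReal := by
  have hQR : (0 : ℝ) < Q := by exact_mod_cast hQ
  set a : ℕ → ℝ := fun j => z + j / Q with ha
  have II : ∀ u v : ℝ, IntervalIntegrable f volume u v := integrable_all f hper hBV
  have hsplit : ∑ j ∈ Finset.range Q, (∫ t in a j..a (j + 1), f t) = c := by
    rw [intervalIntegral.sum_integral_adjacent_intervals (fun k _ => II _ _)]
    have h0 : a 0 = z := by simp [ha]
    have hQ' : a Q = z + 1 := by
      simp only [ha]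
      rw [div_self (ne_of_gt hQR)]
    rw [h0, hQ', hc]
    have := hper.intervalIntegral_add_eq z 0
    simpa using this
  set I : ℕ → ℝ := fun j => ∫ t in a j..a (j + 1), f t with hI
  have hQc : (Q : ℝ) * c = ∑ j ∈ Finset.range Q, (Q : ℝ) * I j := by
    rw [← Finset.mul_sum, hsplit]
  -- choose comparison points
  have hex : ∀ j : ℕ, ∃ t, t ∈ Icc (z + j / Q) (z + (j + 1) / Q) ∧
      (j < Q → |f (y j) - (Q : ℝ) * I j| ≤ |f (y j) - f t|) := by
    intro j
    have hab : a j < a (j + 1) := by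
      simp only [ha]
      have : (j : ℝ) / Q < ((j : ℝ) + 1) / Q := by
        rw [div_lt_div_iff_of_pos_right hQR]
        linarith
      push_cast
      linarith
    obtain ⟨t, ht, hle⟩ := exists_osc_point f hab (II (a j) (a (j + 1))) (y j)
    refine ⟨t, ?_, fun _ => ?_⟩
    · simpa [ha] using ht
    · have hba : a (j + 1) - a j = 1 / Q := by
        simp only [ha]
        push_cast
        ring
      have : (∫ s in a j..a (j + 1), f s) / (a (j + 1) - a j) = (Q : ℝ) * I j := by
        rw [hba, hI]
        field_simp
      rw [← this]
      exact hle
  choose t ht1 ht2 using hex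
  have step1 : |∑ j ∈ Finset.range Q, f (y j) - (Q : ℝ) * c| ≤
      ∑ j ∈ Finset.range Q, |f (y j) - f (t j)| := by
    rw [hQc, ← Finset.sum_sub_distrib]
    refine le_trans (Finset.abs_sum_le_sum_abs _ _) ?_
    apply Finset.sum_le_sum
    intro j hj
    exact ht2 j (Finset.mem_range.mp hj)
  have step2 : ∑ j ∈ Finset.range Q, |f (y j) - f (t j)| ≤
      (eVariationOn f (Set.Icc 0 1)).toReal := by
    have hvb := var_sum_bound f z Q hQ y t hy (fun j _ => ht1 j)
    rw [evar_per f hper z] at hvb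
    have hne : eVariationOn f (Set.Icc 0 1) ≠ ⊤ := by
      simpa [BoundedVariationOn] using hBV
    calc ∑ j ∈ Finset.range Q, |f (y j) - f (t j)|
        = (ENNReal.ofReal (∑ j ∈ Finset.range Q, |f (y j) - f (t j)|)).toReal := by
          rw [ENNReal.toReal_ofReal (Finset.sum_nonneg fun j _ => abs_nonneg _)]
      _ ≤ (eVariationOn f (Set.Icc 0 1)).toReal := ENNReal.toReal_mono hne hvb
  exact le_trans step1 step2

private lemma periodic_nat_add (f : ℝ → ℝ) (hper : Function.Periodic f 1) (m : ℕ) (t : ℝ) :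
    f (t + m) = f t := by
  have := periodic_int_add f hper (m : ℤ) t
  push_cast at this
  exact this



/-- Let α be irrational with convergent denominators (qₙ) and f : 𝕋 → ℝ of
bounded variation with mean c_f = ∫ f dλ.  Then the sequence (f⁽qₙ⁾ − qₙc_f) is
uniformly bounded: |f⁽qₙ⁾(x) − qₙc_f| ≤ Var f for all x and n. -/
theorem stmt10 (α : ℝ) (hα : Irrational α) (a : ℕ → ℕ) (p q : ℕ → ℕ)
    (ha : ∀ n, 1 ≤ n → 1 ≤ a n)
    (hq0 : q 0 = 1) (hq1 : q 1 = a 1) (hqrec : ∀ n, q (n + 2) = a (n + 2) * q (n + 1) + q n)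
    (hp0 : p 0 = 0) (hp1 : p 1 = 1) (hprec : ∀ n, p (n + 2) = a (n + 2) * p (n + 1) + p n)
    (happrox : ∀ n, 1 / (2 * (q n : ℝ) * q (n + 1)) < |α - (p n : ℝ) / q n| ∧
      |α - (p n : ℝ) / q n| < 1 / ((q n : ℝ) * q (n + 1)))
    (f : ℝ → ℝ) (hper : Function.Periodic f 1)
    (hBV : BoundedVariationOn f (Set.Icc 0 1))
    (c : ℝ) (hc : c = ∫ t in (0:ℝ)..1, f t) :
    ∀ n : ℕ, ∀ x : ℝ,
      |∑ k ∈ Finset.range (q n), f (x + (k : ℝ) * α) - (q n : ℝ) * c| ≤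
        (eVariationOn f (Set.Icc 0 1)).toReal := by
  -- basic facts about q
  have hqpos : ∀ n, 0 < q n := by
    intro n
    induction n using Nat.strong_induction_on with
    | _ n ih =>
      match n with
      | 0 => simp [hq0]
      | 1 => rw [hq1]; exact ha 1 le_rfl
      | (m + 2) =>
        rw [hqrec m]
        have := ih m (by omega)
        positivity
  have hqmono : ∀ n, q n ≤ q (n + 1) := by
    intro n
    match n with
    | 0 => rw [hq0, hq1]; exact ha 1 le_rfl
    | (m + 1) =>
      rw [hqrec m]
      calc q (m + 1) = 1 * q (m + 1) := (one_mul _).symm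
        _ ≤ a (m + 2) * q (m + 1) + q m :=
            Nat.le_add_right_of_le (Nat.mul_le_mul_right _ (ha (m + 2) (by omega)))
  -- coprimality
  have hd : ∀ n, (p (n + 1) : ℤ) * q n - p n * q (n + 1) = (-1) ^ n := by
    intro n
    induction n with
    | zero => simp [hp0, hp1, hq0]
    | succ m ih =>
      rw [hprec m, hqrec m]
      push_cast
      push_cast at ih
      ring_nf
      ring_nf at ih
      linarith
  have hcop : ∀ n, Nat.Coprime (p n) (q n) := by
    intro n
    have hε : ((-1 : ℤ) ^ n) * ((-1 : ℤ) ^ n) = 1 := by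
      rw [← pow_add]
      exact Even.neg_one_pow ⟨n, by ring⟩
    have hcop : IsCoprime ((p n : ℤ)) ((q n : ℤ)) :=
      ⟨-((-1 : ℤ) ^ n) * q (n + 1), ((-1 : ℤ) ^ n) * p (n + 1), by
        linear_combination ((-1 : ℤ) ^ n) * hd n + hε⟩
    have := Int.isCoprime_iff_gcd_eq_one.mp hcop
    simpa [Int.gcd_natCast_natCast] using this
  intro n x
  set Q : ℕ := q n with hQdef
  set P : ℕ := p n with hPdef
  have hQpos : 0 < Q := hqpos n
  have hQR : (0 : ℝ) < Q := by exact_mod_cast hQpos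
  have hq'pos : (0 : ℝ) < q (n + 1) := by exact_mod_cast hqpos (n + 1)
  have hQq' : (Q : ℝ) ≤ q (n + 1) := by exact_mod_cast hqmono n
  set θ : ℝ := α - (P : ℝ) / Q with hθdef
  have hθub : |θ| < 1 / ((Q : ℝ) * q (n + 1)) := (happrox n).2
  -- key bound : k * |θ| ≤ 1/Q for k < Q
  have hθk : ∀ k : ℕ, k < Q → (k : ℝ) * |θ| ≤ 1 / Q := by
    intro k hk
    have hkR : (k : ℝ) ≤ (Q : ℝ) - 1 := by
      have : (k : ℝ) + 1 ≤ Q := by exact_mod_cast Nat.succ_le_of_lt hk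
      linarith
    have h0 : (0 : ℝ) ≤ |θ| := abs_nonneg _
    have h1 : (k : ℝ) * |θ| ≤ ((Q : ℝ) - 1) * |θ| := by
      apply mul_le_mul_of_nonneg_right hkR h0
    have h2 : ((Q : ℝ) - 1) * |θ| ≤ ((Q : ℝ) - 1) * (1 / ((Q : ℝ) * q (n + 1))) := by
      apply mul_le_mul_of_nonneg_left hθub.le (by linarith)
    have h3 : ((Q : ℝ) - 1) * (1 / ((Q : ℝ) * q (n + 1))) ≤ 1 / Q := by
      rw [mul_one_div, div_le_div_iff₀ (by positivity) hQR]
      nlinarith [hQq', hQR, hq'pos]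
    linarith
  -- modular inverse
  obtain ⟨Pinv, hinv⟩ : ∃ m, (P * m) % Q = 1 % Q := by
    rcases eq_or_lt_of_le (Nat.one_le_iff_ne_zero.mpr hQpos.ne') with h1 | h1
    · have hQ1 : Q = 1 := h1.symm
      exact ⟨0, by rw [hQ1]; simp⟩
    · obtain ⟨m, -, hm⟩ := Nat.exists_mul_mod_eq_one_of_coprime (hcop n) h1
      refine ⟨m, ?_⟩
      rw [hm, Nat.mod_eq_of_lt h1]
  have hinvME : (P * Pinv) ≡ 1 [MOD Q] := hinv
  set σ : ℕ → ℕ := fun k => (k * P) % Q with hσdef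
  set τ : ℕ → ℕ := fun j => (j * Pinv) % Q with hτdef
  have hσlt : ∀ k, σ k < Q := fun k => Nat.mod_lt _ hQpos
  have hτlt : ∀ j, τ j < Q := fun j => Nat.mod_lt _ hQpos
  have hτσ : ∀ k, k < Q → τ (σ k) = k := by
    intro k hk
    have h1 : (k * P % Q) * Pinv ≡ k * P * Pinv [MOD Q] :=
      (Nat.mod_modEq _ _).mul_right Pinv
    have h2 : k * P * Pinv ≡ k * 1 [MOD Q] := by
      have : k * P * Pinv = k * (P * Pinv) := by ring
      rw [this]
      exact Nat.ModEq.mul_left k hinvME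
    have : τ (σ k) = (k * 1) % Q := (h1.trans h2)
    rw [this, mul_one, Nat.mod_eq_of_lt hk]
  have hστ : ∀ j, j < Q → σ (τ j) = j := by
    intro j hj
    have h1 : (j * Pinv % Q) * P ≡ j * Pinv * P [MOD Q] :=
      (Nat.mod_modEq _ _).mul_right P
    have h2 : j * Pinv * P ≡ j * 1 [MOD Q] := by
      have : j * Pinv * P = j * (P * Pinv) := by ring
      rw [this]
      exact Nat.ModEq.mul_left j hinvME
    have : σ (τ j) = (j * 1) % Q := (h1.trans h2)
    rw [this, mul_one, Nat.mod_eq_of_lt hj]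
  clear_value σ τ θ P Q
  -- the points
  set y : ℕ → ℝ := fun j => x + (j : ℝ) / Q + (τ j : ℝ) * θ with hydef
  clear_value y
  -- rewrite the sum
  have hsum : ∑ k ∈ Finset.range Q, f (x + (k : ℝ) * α) =
      ∑ j ∈ Finset.range Q, f (y j) := by
    apply Finset.sum_nbij' (i := σ) (j := τ)
    · intro k hk
      exact Finset.mem_range.mpr (hσlt k)
    · intro j hj
      exact Finset.mem_range.mpr (hτlt j)
    · intro k hk
      exact hτσ k (Finset.mem_range.mp hk)
    · intro j hj
      exact hστ j (Finset.mem_range.mp hj)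
    · intro k hk
      have hk' : k < Q := Finset.mem_range.mp hk
      have hσk : σ k = k * P % Q := by rw [hσdef]
      have hdm : (Q * (k * P / Q) + k * P % Q : ℕ) = k * P := Nat.div_add_mod _ _
      rw [← hσk] at hdm
      have hdmR : ((Q : ℝ)) * ((k * P / Q : ℕ) : ℝ) + ((σ k : ℕ) : ℝ) = (k : ℝ) * P := by
        exact_mod_cast congrArg (fun t : ℕ => (t : ℝ)) hdm
      have harg : x + (k : ℝ) * α =
          (x + (σ k : ℝ) / Q + (k : ℝ) * θ) + ((k * P / Q : ℕ) : ℝ) := by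
        have hkα : (k : ℝ) * α = (k : ℝ) * P / Q + (k : ℝ) * θ := by
          rw [hθdef]
          field_simp
          ring
        rw [hkα]
        field_simp
        linarith [hdmR]
      rw [harg, periodic_nat_add f hper _ _, hydef]
      simp only [hτσ k hk']
  rw [hsum]
  -- membership of points
  rcases le_or_gt 0 θ with hθpos | hθneg
  · apply main_bound f hper hBV c hc x Q hQpos y
    intro j hj
    have hτj := hθk (τ j) (hτlt j)
    rw [abs_of_nonneg hθpos] at hτj
    have h0 : 0 ≤ (τ j : ℝ) * θ := by positivity
    constructor
    · simp only [hydef]; linarith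
    · simp only [hydef]
      have : ((j : ℝ) + 1) / Q = (j : ℝ) / Q + 1 / Q := by ring
      rw [this]
      linarith
  · apply main_bound f hper hBV c hc (x - 1 / Q) Q hQpos y
    intro j hj
    have hτj := hθk (τ j) (hτlt j)
    rw [abs_of_neg hθneg] at hτj
    have h0 : (τ j : ℝ) * θ ≤ 0 := by
      apply mul_nonpos_of_nonneg_of_nonpos (by positivity) hθneg.le
    have h1 : -(1 / (Q : ℝ)) ≤ (τ j : ℝ) * θ := by nlinarith
    constructor
    · simp only [hydef]; linarith
    · simp only [hydef]
      have : x - 1 / Q + ((j : ℝ) + 1) / Q = x + (j : ℝ) / Q := by ring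
      rw [this]
      linarith

end DenjoyKoksmaAux
end
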